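/- (Expected transmission rate: the finite balance system.) Assume N ≥ 3. Let n = (n_1,…,n_{N−1}) be a threshold policy with τ = max_d n_d ≥ 2, write l_d = d(d+1)/2, and let π be a stationary distribution of the chain induced by n; set Π_d = Σ_{Δ ≥ τ} π_d(Δ). Then the expected transmission rate R̄ = Σ_{d=1}^{N−1} Σ_{Δ ≥ n_d} π_d(Δ) equals Σ_{d=1}^{N−1} (Σ_{Δ=n_d}^{τ−1} π_d(Δ) + Π_d), and the following finite system of equations holds: (i) for each 1 ≤ d ≤ N−1, π_d(Δ) = 0 for all Δ with 0 ≤ Δ < l_d; (ii) for each 1 ≤ d ≤ N−1 and each Δ with max{2, l_d} ≤ Δ ≤ τ−1, π_d(Δ) = Σ_{d′=1}^{N−1} P_{d′,d}·(1 − p_s·a(d′,Δ−d))·π_{d′}(Δ−d); (iii) for each 1 ≤ d ≤ N−1, Π_d = Σ_{d′=1}^{N−1} P_{d′,d}·(Σ_{Δ=τ−d}^{τ−1}(1 − p_s·a(d′,Δ))·π_{d′}(Δ) + p_f·Π_{d′}); (iv) π_0(0) = (1−2p)·π_0(0) + p·Σ_{Δ=1}^{τ−1}(1 − p_s·a(1,Δ))·π_1(Δ)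 + p_f·p·Π_1 + p_s(1−2p)·Σ_{d=1}^{N−1}(Σ_{Δ=n_d}^{τ−1} π_d(Δ) + Π_d); (v) π_1(1) = 2p·π_0(0) + 2p_s·p·Σ_{d=1}^{N−1}(Σ_{Δ=n_d}^{τ−1} π_d(Δ) + Π_d); (vi) Σ_{d=1}^{N−1}(Σ_{Δ=l_d}^{τ−1} π_d(Δ) + Π_d) + π_0(0) = 1. -/

import Mathlib

/-- Transition weights of the source mismatch chain:
`P d d = 1 - 2p` for `0 ≤ d ≤ N-1`; `P d (d±1) = p` for `1 ≤ d ≤ N-2`;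
`P 0 1 = 2p`, `P (N-1) (N-2) = 2p`; all other entries `0`. -/
noncomputable def Pw (N : ℕ) (p : ℝ) (d d' : ℕ) : ℝ :=
  if d' = d then 1 - 2 * p
  else if d = 0 ∧ d' = 1 then 2 * p
  else if d = N - 1 ∧ d' = N - 2 then 2 * p
  else if 1 ≤ d ∧ d ≤ N - 2 ∧ (d' = d + 1 ∨ d' + 1 = d) then p
  else 0

/-- One-step transition kernel under action `a = 0` (idle):
`K₀((d,Δ),(d',Δ'(d'))) = P_{d,d'}` where `Δ'(d') = 0` if `d' = 0` and
`Δ'(d') = Δ + d'` otherwise. -/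
noncomputable def K0 (N : ℕ) (p : ℝ) (x y : ℕ × ℕ) : ℝ :=
  if y.2 = (if y.1 = 0 then 0 else x.2 + y.1) then Pw N p x.1 y.1 else 0

/-- One-step transition kernel under action `a = 1` (transmit):
`K₁((d,Δ),·) = p_s(1-2p)·δ_{(0,0)} + 2 p_s p·δ_{(1,1)} + p_f·K₀((d,Δ),·)`,
with `p_f = 1 - p_s`. -/
noncomputable def K1 (N : ℕ) (p ps : ℝ) (x y : ℕ × ℕ) : ℝ :=
  ps * (1 - 2 * p) * (if y = (0, 0) then 1 else 0)
    + 2 * ps * p * (if y = (1, 1) then 1 else 0)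
    + (1 - ps) * K0 N p x y

/-- Kernel induced by a threshold policy `n = (n_1,…,n_{N-1})`: the policy takes
action `a(d,Δ) = 1` if `d ≥ 1` and `Δ ≥ n_d`, and `a(d,Δ) = 0` otherwise. -/
noncomputable def Kpol (N : ℕ) (p ps : ℝ) (n : ℕ → ℕ) (x y : ℕ × ℕ) : ℝ :=
  if 1 ≤ x.1 ∧ n x.1 ≤ x.2 then K1 N p ps x y else K0 N p x y

/-- `IsStationary N p ps n π`: `π` is a stationary distribution of the chain induced
by the threshold policy `n`: `π` takes values in `[0,1]`, is supported on states with
`d ≤ N-1`, sums to `1`, and satisfies `π(x) = Σ_{x'} K(x',x)·π(x')` for every `x`. -/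
def IsStationaryPol (N : ℕ) (p ps : ℝ) (n : ℕ → ℕ) (π : ℕ × ℕ → ℝ) : Prop :=
  (∀ x, 0 ≤ π x ∧ π x ≤ 1) ∧
  (∀ x : ℕ × ℕ, N ≤ x.1 → π x = 0) ∧
  HasSum π 1 ∧
  (∀ x : ℕ × ℕ, HasSum (fun x' => Kpol N p ps n x' x * π x') (π x))

/-- Real-valued action indicator of the threshold policy `n`:
`a(d,Δ) = 1` if `d ≥ 1` and `Δ ≥ n_d`, else `0`. -/
noncomputable def Aact (n : ℕ → ℕ) (d Δ : ℕ) : ℝ :=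
  if 1 ≤ d ∧ n d ≤ Δ then 1 else 0

/-- Tail mass `Π_d = Σ_{Δ ≥ τ} π_d(Δ)`. -/
noncomputable def Pid (π : ℕ × ℕ → ℝ) (τ d : ℕ) : ℝ := ∑' Δ : ℕ, π (d, Δ + τ)

/-- The age lower bound `l_d = d(d+1)/2`. -/
def lB (d : ℕ) : ℕ := d * (d + 1) / 2

/- ---------- helpers ---------- -/

lemma lB_succ (k : ℕ) : lB (k + 1) = lB k + (k + 1) := by
  unfold lB
  have h : (k + 1) * (k + 1 + 1) = k * (k + 1) + 2 * (k + 1) := by ring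
  rw [h, Nat.add_mul_div_left _ _ (by norm_num : 0 < 2)]

lemma lB_mono {a b : ℕ} (h : a ≤ b) : lB a ≤ lB b :=
  Nat.div_le_div_right (Nat.mul_le_mul h (by omega))

lemma self_le_lB (d : ℕ) : d ≤ lB d := by
  rcases Nat.eq_zero_or_pos d with rfl | h
  · simp [lB]
  · rw [lB, Nat.le_div_iff_mul_le (by norm_num : 0 < 2)]
    exact Nat.mul_le_mul le_rfl (by omega)

section Pwlem
variable {N : ℕ} {p : ℝ} {a b d d' : ℕ}

lemma Pw_nonneg (hp0 : 0 ≤ p) (hp1 : p ≤ 1 / 3) : 0 ≤ Pw N p a b := by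
  unfold Pw; split_ifs <;> linarith

lemma Pw_le_one (hp0 : 0 ≤ p) (hp1 : p ≤ 1 / 3) : Pw N p a b ≤ 1 := by
  unfold Pw; split_ifs <;> linarith

lemma Pw_src_zero (hN : 3 ≤ N) (h2 : 2 ≤ a) : Pw N p a 0 = 0 := by
  rw [Pw, if_neg (by omega), if_neg (by omega), if_neg (by omega), if_neg (by omega)]

lemma Pw_zero_tgt (hN : 3 ≤ N) (hd : 2 ≤ d) : Pw N p 0 d = 0 := by
  rw [Pw, if_neg (by omega), if_neg (by omega), if_neg (by omega), if_neg (by omega)]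

lemma Pw_far (h : d' + 1 < d) : Pw N p d' d = 0 := by
  rw [Pw, if_neg (by omega), if_neg (by omega), if_neg (by omega), if_neg (by omega)]

lemma Pw_00 : Pw N p 0 0 = 1 - 2 * p := by simp [Pw]

lemma Pw_01 : Pw N p 0 1 = 2 * p := by simp [Pw]

lemma Pw_10 (hN : 3 ≤ N) : Pw N p 1 0 = p := by
  rw [Pw, if_neg (by omega), if_neg (by omega), if_neg (by omega), if_pos (by omega)]

end Pwlem

section Aactlem
variable {n : ℕ → ℕ} {d Δ : ℕ} {ps : ℝ}

lemma Aact_nonneg : 0 ≤ Aact n d Δ := by unfold Aact; split_ifs <;> norm_num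

lemma Aact_le_one : Aact n d Δ ≤ 1 := by unfold Aact; split_ifs <;> norm_num

lemma Aact_zero : Aact n 0 Δ = 0 := by simp [Aact]

lemma Aact_one (hd : 1 ≤ d) (h : n d ≤ Δ) : Aact n d Δ = 1 := by
  simp [Aact, hd, h]

lemma fact_nonneg (hps1 : ps ≤ 1) : 0 ≤ 1 - ps * Aact n d Δ := by
  unfold Aact; split_ifs <;> simp <;> linarith

lemma fact_le_one (hps0 : 0 ≤ ps) : 1 - ps * Aact n d Δ ≤ 1 := by
  unfold Aact; split_ifs <;> simp <;> linarith

end Aactlem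

lemma sandwich {a b c : ℝ} (ha : 0 ≤ a) (ha1 : a ≤ 1) (hb : 0 ≤ b) (hb1 : b ≤ 1)
    (hc : 0 ≤ c) : 0 ≤ a * (b * c) ∧ a * (b * c) ≤ c := by
  have h1 : b * c ≤ c := by nlinarith
  have h2 : a * (b * c) ≤ 1 * (b * c) := by
    have := mul_nonneg hb hc
    nlinarith
  exact ⟨by positivity, by linarith⟩

/- ---------- kernel evaluation ---------- -/

section Keval
variable {N : ℕ} {p ps : ℝ} {n : ℕ → ℕ} {d Δ : ℕ}

lemma K0_eval (hd : d ≠ 0) (x : ℕ × ℕ) :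
    K0 N p x (d, Δ) = (if Δ = x.2 + d then Pw N p x.1 d else 0) := by
  simp only [K0, hd, if_false]

lemma Kpol_eval_gen (hd : 1 ≤ d) (hne : ¬(d = 1 ∧ Δ = 1)) (x : ℕ × ℕ) :
    Kpol N p ps n x (d, Δ)
      = (1 - ps * Aact n x.1 x.2) * (if Δ = x.2 + d then Pw N p x.1 d else 0) := by
  have h00 : ((d, Δ) : ℕ × ℕ) ≠ (0, 0) := by
    simp only [ne_eq, Prod.mk.injEq, not_and]; omega
  have h11 : ((d, Δ) : ℕ × ℕ) ≠ (1, 1) := by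
    simp only [ne_eq, Prod.mk.injEq, not_and]; intro h1 h2; exact hne ⟨h1, h2⟩
  unfold Kpol K1 Aact
  rw [K0_eval (by omega) x, if_neg h00, if_neg h11]
  split_ifs with ha <;> ring

lemma Kpol_eval_00 (x : ℕ × ℕ) :
    Kpol N p ps n x (0, 0)
      = ps * (1 - 2 * p) * Aact n x.1 x.2
        + Pw N p x.1 0 * (1 - ps * Aact n x.1 x.2) := by
  have hK0 : K0 N p x (0, 0) = Pw N p x.1 0 := by simp [K0]
  have e1 : (if ((0, 0) : ℕ × ℕ) = (0, 0) then (1 : ℝ) else 0) = 1 := if_pos rfl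
  have e2 : (if ((0, 0) : ℕ × ℕ) = (1, 1) then (1 : ℝ) else 0) = 0 := if_neg (by simp)
  unfold Kpol K1 Aact
  rw [hK0, e1, e2]
  split_ifs with ha <;> ring

lemma Kpol_eval_11 (x : ℕ × ℕ) :
    Kpol N p ps n x (1, 1)
      = 2 * ps * p * Aact n x.1 x.2
        + (1 - ps * Aact n x.1 x.2) * (if x.2 = 0 then Pw N p x.1 1 else 0) := by
  have hK0 : K0 N p x (1, 1) = (if x.2 = 0 then Pw N p x.1 1 else 0) := by
    rw [K0_eval (by omega) x]
    by_cases h : x.2 = 0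
    · rw [if_pos (by omega), if_pos h]
    · rw [if_neg (by omega), if_neg h]
  have e1 : (if ((1, 1) : ℕ × ℕ) = (0, 0) then (1 : ℝ) else 0) = 0 := if_neg (by simp)
  have e2 : (if ((1, 1) : ℕ × ℕ) = (1, 1) then (1 : ℝ) else 0) = 1 := if_pos rfl
  unfold Kpol K1 Aact
  rw [hK0, e1, e2]
  split_ifs with ha <;> ring

lemma Kpol_zero_at0 (hΔ : 1 ≤ Δ) (x : ℕ × ℕ) : Kpol N p ps n x (0, Δ) = 0 := by
  have hK0 : K0 N p x (0, Δ) = 0 := by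
    simp only [K0]
    rw [if_neg (by simp; omega)]
  have h00 : ((0, Δ) : ℕ × ℕ) ≠ (0, 0) := by
    simp only [ne_eq, Prod.mk.injEq, not_and]; omega
  have h11 : ((0, Δ) : ℕ × ℕ) ≠ (1, 1) := by
    simp only [ne_eq, Prod.mk.injEq, not_and]; omega
  unfold Kpol K1
  rw [hK0, if_neg h00, if_neg h11]
  split_ifs <;> ring

end Keval

/- ---------- stationarity consequences ---------- -/

section Stat
variable {N : ℕ} {p ps : ℝ} {n : ℕ → ℕ} {π : ℕ × ℕ → ℝ}

lemma pi_nonneg (hπ : IsStationaryPol N p ps n π) (x : ℕ × ℕ) : 0 ≤ π x := (hπ.1 x).1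

lemma summable_row (hπ : IsStationaryPol N p ps n π) (d : ℕ) :
    Summable (fun Δ => π (d, Δ)) := by
  have hinj : Function.Injective (fun Δ : ℕ => ((d, Δ) : ℕ × ℕ)) := by
    intro a b hab
    simpa using hab
  exact hπ.2.2.1.summable.comp_injective hinj

lemma summable_shift (hπ : IsStationaryPol N p ps n π) (d m : ℕ) :
    Summable (fun j => π (d, j + m)) :=
  (summable_row hπ d).comp_injective (add_left_injective m)

lemma row0 (hπ : IsStationaryPol N p ps n π) {Δ : ℕ} (hΔ : 1 ≤ Δ) : π (0, Δ) = 0 := by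
  have h := hπ.2.2.2 (0, Δ)
  have hz : (fun x' => Kpol N p ps n x' (0, Δ) * π x') = fun _ => (0 : ℝ) := by
    funext x'
    rw [Kpol_zero_at0 hΔ, zero_mul]
  rw [hz] at h
  exact h.unique hasSum_zero

lemma balance_lt (hπ : IsStationaryPol N p ps n π) {d Δ : ℕ} (hd : 1 ≤ d)
    (hne : ¬(d = 1 ∧ Δ = 1)) (hlt : Δ < d) : π (d, Δ) = 0 := by
  have h := hπ.2.2.2 (d, Δ)
  have hz : (fun x' => Kpol N p ps n x' (d, Δ) * π x') = fun _ => (0 : ℝ) := by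
    funext x'
    rw [Kpol_eval_gen hd hne, if_neg (by omega), mul_zero, zero_mul]
  rw [hz] at h
  exact h.unique hasSum_zero

lemma balance_ge (hπ : IsStationaryPol N p ps n π) {d Δ : ℕ} (hd : 1 ≤ d)
    (hne : ¬(d = 1 ∧ Δ = 1)) (hge : d ≤ Δ) :
    π (d, Δ) = ∑ d' ∈ Finset.Icc 0 (N - 1),
      Pw N p d' d * ((1 - ps * Aact n d' (Δ - d)) * π (d', Δ - d)) := by
  have h := hπ.2.2.2 (d, Δ)
  set s : Finset (ℕ × ℕ) := (Finset.Icc 0 (N - 1)).image (fun d' => (d', Δ - d)) with hs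
  have hsupp : ∀ x' ∉ s, Kpol N p ps n x' (d, Δ) * π x' = 0 := by
    intro x' hx'
    by_cases hN' : x'.1 ≤ N - 1
    · by_cases h2 : x'.2 = Δ - d
      · exfalso
        apply hx'
        rw [hs]
        exact Finset.mem_image.mpr ⟨x'.1, Finset.mem_Icc.mpr ⟨Nat.zero_le _, hN'⟩,
          by rw [← h2]⟩
      · rw [Kpol_eval_gen hd hne, if_neg (by omega), mul_zero, zero_mul]
    · rw [hπ.2.1 x' (by omega), mul_zero]
  have h2 := hasSum_sum_of_ne_finset_zero (L := SummationFilter.unconditional _) hsupp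
  have h3 := h.unique h2
  rw [h3, hs, Finset.sum_image (by intro a _ b _ hab; simpa using hab)]
  refine Finset.sum_congr rfl fun d' _ => ?_
  rw [Kpol_eval_gen hd hne]
  dsimp only
  rw [if_pos (by omega : Δ = Δ - d + d)]
  ring

lemma balance_main (hπ : IsStationaryPol N p ps n π) (hN : 3 ≤ N) {d Δ : ℕ}
    (hd : 1 ≤ d) (h2 : 2 ≤ Δ) (hge : d ≤ Δ) :
    π (d, Δ) = ∑ d' ∈ Finset.Icc 1 (N - 1),
      Pw N p d' d * ((1 - ps * Aact n d' (Δ - d)) * π (d', Δ - d)) := by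
  have hne : ¬(d = 1 ∧ Δ = 1) := by omega
  rw [balance_ge hπ hd hne hge]
  have hI : Finset.Icc 0 (N - 1) = insert 0 (Finset.Icc 1 (N - 1)) := by
    ext a
    simp only [Finset.mem_Icc, Finset.mem_insert]
    omega
  rw [hI, Finset.sum_insert (by simp)]
  have hz : Pw N p 0 d * ((1 - ps * Aact n 0 (Δ - d)) * π (0, Δ - d)) = 0 := by
    rcases Nat.lt_or_ge d 2 with hd1 | hd2
    · have hd1' : d = 1 := by omega
      subst hd1'
      rw [row0 hπ (by omega : 1 ≤ Δ - 1)]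
      ring
    · rw [Pw_zero_tgt hN hd2]
      ring
  rw [hz, zero_add]

lemma part_i_aux (hπ : IsStationaryPol N p ps n π) (hN : 3 ≤ N) :
    ∀ Δ d : ℕ, 1 ≤ d → Δ < lB d → π (d, Δ) = 0 := by
  intro Δ
  induction Δ using Nat.strong_induction_on with
  | _ Δ IH =>
    intro d hd hΔ
    have hlb1 : lB 1 = 1 := rfl
    have hne : ¬(d = 1 ∧ Δ = 1) := by
      rintro ⟨rfl, rfl⟩
      omega
    rcases Nat.lt_or_ge Δ d with hlt | hge
    · exact balance_lt hπ hd hne hlt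
    · have hd2 : 2 ≤ d := by
        rcases Nat.lt_or_ge d 2 with h | h
        · exfalso
          have hd1 : d = 1 := by omega
          subst hd1
          omega
        · exact h
      rw [balance_ge hπ hd hne hge]
      apply Finset.sum_eq_zero
      intro d' _
      rcases Nat.lt_or_ge (d' + 1) d with hfar | hnear
      · rw [Pw_far hfar]; ring
      · have hd'1 : 1 ≤ d' := by omega
        have h1 : lB d = lB (d - 1) + d := by
          have h0 := lB_succ (d - 1)
          rw [Nat.sub_add_cancel (by omega)] at h0
          omega
        have h2 : lB (d - 1) ≤ lB d' := lB_mono (by omega)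
        have hkey : Δ - d < lB d' := by omega
        rw [IH (Δ - d) (by omega) d' hd'1 hkey]
        ring

end Stat

section Stat2
variable {N : ℕ} {p ps : ℝ} {n : ℕ → ℕ} {π : ℕ × ℕ → ℝ}

lemma tail_split (hπ : IsStationaryPol N p ps n π) {d m τ : ℕ} (hm : m ≤ τ) :
    (∑' j, π (d, j + m)) = (∑ Δ ∈ Finset.Ico m τ, π (d, Δ)) + Pid π τ d := by
  have h := Summable.sum_add_tsum_nat_add (f := fun j => π (d, j + m)) (τ - m)
    (summable_shift hπ d m)
  rw [← h]
  congr 1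
  · rw [Finset.sum_Ico_eq_sum_range]
    exact Finset.sum_congr rfl fun i _ => by rw [Nat.add_comm m i]
  · unfold Pid
    apply tsum_congr
    intro j
    have h2 : j + (τ - m) + m = j + τ := by omega
    exact congrArg (fun t => π (d, t)) h2

lemma tsum_decomp (hπ : IsStationaryPol N p ps n π) {f : ℕ × ℕ → ℝ}
    (hnn : ∀ x, 0 ≤ f x) (hle : ∀ x, f x ≤ π x) :
    (∑' x : ℕ × ℕ, f x) = ∑' (a : ℕ) (b : ℕ), f (a, b) := by
  have hs : Summable f := Summable.of_nonneg_of_le hnn hle hπ.2.2.1.summable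
  refine Summable.tsum_prod' hs fun a => ?_
  exact Summable.of_nonneg_of_le (fun b => hnn _) (fun b => hle _) (summable_row hπ a)

lemma hasSum_R (hπ : IsStationaryPol N p ps n π) (hN : 3 ≤ N) {τ : ℕ}
    (hτub : ∀ d ∈ Finset.Icc 1 (N - 1), n d ≤ τ) :
    HasSum (fun x : ℕ × ℕ => Aact n x.1 x.2 * π x)
      (∑ d ∈ Finset.Icc 1 (N - 1),
        ((∑ Δ ∈ Finset.Ico (n d) τ, π (d, Δ)) + Pid π τ d)) := by
  have hπ0 : ∀ x, 0 ≤ π x := pi_nonneg hπ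
  have hnn : ∀ x : ℕ × ℕ, 0 ≤ Aact n x.1 x.2 * π x :=
    fun x => mul_nonneg Aact_nonneg (hπ0 x)
  have hle : ∀ x : ℕ × ℕ, Aact n x.1 x.2 * π x ≤ π x :=
    fun x => mul_le_of_le_one_left (hπ0 x) Aact_le_one
  have hs : Summable (fun x : ℕ × ℕ => Aact n x.1 x.2 * π x) :=
    Summable.of_nonneg_of_le hnn hle hπ.2.2.1.summable
  suffices h : (∑' x : ℕ × ℕ, Aact n x.1 x.2 * π x)
      = ∑ d ∈ Finset.Icc 1 (N - 1),
          ((∑ Δ ∈ Finset.Ico (n d) τ, π (d, Δ)) + Pid π τ d) by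
    rw [← h]
    exact hs.hasSum
  rw [tsum_decomp hπ hnn hle]
  rw [tsum_eq_sum (s := Finset.Icc 1 (N - 1)) ?_]
  · dsimp only
    refine Finset.sum_congr rfl fun a ha => ?_
    rw [Finset.mem_Icc] at ha
    have h2 := Summable.sum_add_tsum_nat_add (f := fun b => Aact n a b * π (a, b)) (n a)
      (Summable.of_nonneg_of_le (fun b => hnn (a, b)) (fun b => hle (a, b))
        (summable_row hπ a))
    rw [← h2]
    have hz : (∑ i ∈ Finset.range (n a), Aact n a i * π (a, i)) = 0 := by
      refine Finset.sum_eq_zero fun i hi => ?_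
      rw [Finset.mem_range] at hi
      rw [Aact, if_neg (by omega), zero_mul]
    have ht : (∑' i : ℕ, Aact n a (i + n a) * π (a, i + n a)) = ∑' i, π (a, i + n a) := by
      refine tsum_congr fun i => ?_
      rw [Aact_one (by omega) (by omega), one_mul]
    rw [hz, ht, zero_add, tail_split hπ (hτub a (Finset.mem_Icc.mpr ha))]
  · intro a ha
    rw [Finset.mem_Icc] at ha
    have hz : ∀ b : ℕ, Aact n (a, b).1 (a, b).2 * π (a, b) = 0 := by
      intro b
      rcases Nat.eq_zero_or_pos a with rfl | h1
      · show Aact n 0 b * π (0, b) = 0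
        rw [Aact_zero, zero_mul]
      · have haN : N ≤ a := by omega
        show Aact n a b * π (a, b) = 0
        rw [hπ.2.1 (a, b) haN, mul_zero]
    calc (∑' b : ℕ, Aact n (a, b).1 (a, b).2 * π (a, b)) = ∑' _ : ℕ, (0 : ℝ) :=
          tsum_congr hz
      _ = 0 := tsum_zero

end Stat2

section Stat3
variable {N : ℕ} {p ps : ℝ} {n : ℕ → ℕ} {π : ℕ × ℕ → ℝ}

lemma part_iii_lem (hπ : IsStationaryPol N p ps n π) (hN : 3 ≤ N)
    (hp0 : 0 ≤ p) (hp1 : p ≤ 1 / 3) (hps0 : 0 < ps) (hps1 : ps ≤ 1) {τ : ℕ}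
    (hτub : ∀ d ∈ Finset.Icc 1 (N - 1), n d ≤ τ) (hτ2 : 2 ≤ τ)
    {d : ℕ} (hd1 : 1 ≤ d) :
    Pid π τ d = ∑ d' ∈ Finset.Icc 1 (N - 1),
      Pw N p d' d *
        ((∑ Δ ∈ Finset.Ico (τ - d) τ, (1 - ps * Aact n d' Δ) * π (d', Δ))
          + (1 - ps) * Pid π τ d') := by
  set m := (τ - d) + d with hm
  have hmτ : τ ≤ m := by omega
  -- step A
  have hA : Pid π τ d = ∑' j, π (d, j + m) := by
    have h := Summable.sum_add_tsum_nat_add (f := fun j => π (d, j + τ)) (m - τ)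
      (summable_shift hπ d τ)
    have hz : (∑ i ∈ Finset.range (m - τ), π (d, i + τ)) = 0 := by
      refine Finset.sum_eq_zero fun i hi => ?_
      rw [Finset.mem_range] at hi
      exact balance_lt hπ hd1 (by omega) (by omega)
    rw [Pid, ← h, hz, zero_add]
    exact tsum_congr fun i => congrArg (fun t => π (d, t)) (by omega : i + (m - τ) + τ = i + m)
  -- step B
  have hB : ∀ j : ℕ, π (d, j + m) = ∑ d' ∈ Finset.Icc 1 (N - 1),
      Pw N p d' d * ((1 - ps * Aact n d' (j + (τ - d))) * π (d', j + (τ - d))) := by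
    intro j
    rw [balance_main hπ hN hd1 (by omega : 2 ≤ j + m) (by omega : d ≤ j + m)]
    refine Finset.sum_congr rfl fun d' _ => ?_
    have he : j + m - d = j + (τ - d) := by omega
    rw [he]
  rw [hA, tsum_congr hB]
  -- step C : swap
  have hbd : ∀ (d' : ℕ) (Δ' : ℕ),
      0 ≤ Pw N p d' d * ((1 - ps * Aact n d' Δ') * π (d', Δ')) ∧
      Pw N p d' d * ((1 - ps * Aact n d' Δ') * π (d', Δ')) ≤ π (d', Δ') :=
    fun d' Δ' => sandwich (Pw_nonneg hp0 hp1) (Pw_le_one hp0 hp1)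
      (fact_nonneg hps1) (fact_le_one hps0.le) (pi_nonneg hπ _)
  have hsum' : ∀ d' ∈ Finset.Icc 1 (N - 1), Summable (fun j =>
      Pw N p d' d * ((1 - ps * Aact n d' (j + (τ - d))) * π (d', j + (τ - d)))) := by
    intro d' _
    exact Summable.of_nonneg_of_le (fun j => (hbd d' _).1) (fun j => (hbd d' _).2)
      (summable_shift hπ d' (τ - d))
  rw [Summable.tsum_finsetSum hsum']
  refine Finset.sum_congr rfl fun d' hd' => ?_
  rw [Finset.mem_Icc] at hd'
  -- step D
  have h := Summable.sum_add_tsum_nat_add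
    (f := fun j => Pw N p d' d * ((1 - ps * Aact n d' (j + (τ - d))) * π (d', j + (τ - d))))
    (τ - (τ - d))
    (Summable.of_nonneg_of_le (fun j => (hbd d' _).1) (fun j => (hbd d' _).2)
      (summable_shift hπ d' (τ - d)))
  rw [← h]
  have e1 : (∑ i ∈ Finset.range (τ - (τ - d)),
        Pw N p d' d * ((1 - ps * Aact n d' (i + (τ - d))) * π (d', i + (τ - d))))
      = ∑ Δ ∈ Finset.Ico (τ - d) τ, Pw N p d' d * ((1 - ps * Aact n d' Δ) * π (d', Δ)) := by
    rw [Finset.sum_Ico_eq_sum_range]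
    exact Finset.sum_congr rfl fun i _ => by rw [Nat.add_comm (τ - d) i]
  have e2 : (∑' i : ℕ,
        Pw N p d' d * ((1 - ps * Aact n d' (i + (τ - (τ - d)) + (τ - d)))
          * π (d', i + (τ - (τ - d)) + (τ - d))))
      = Pw N p d' d * ((1 - ps) * Pid π τ d') := by
    have he : ∀ i : ℕ, i + (τ - (τ - d)) + (τ - d) = i + τ := fun i => by omega
    have e3 : ∀ i : ℕ,
        Pw N p d' d * ((1 - ps * Aact n d' (i + (τ - (τ - d)) + (τ - d)))
          * π (d', i + (τ - (τ - d)) + (τ - d)))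
        = Pw N p d' d * ((1 - ps) * π (d', i + τ)) := by
      intro i
      rw [he i, Aact_one hd'.1 (le_trans (hτub d' (Finset.mem_Icc.mpr hd')) (by omega)),
        mul_one]
    rw [tsum_congr e3, tsum_mul_left, tsum_mul_left]
    rfl
  rw [e1, e2, mul_add, Finset.mul_sum]

end Stat3

section Stat4
variable {N : ℕ} {p ps : ℝ} {n : ℕ → ℕ} {π : ℕ × ℕ → ℝ}

lemma part_iv_lem (hπ : IsStationaryPol N p ps n π) (hN : 3 ≤ N)
    (hp0 : 0 ≤ p) (hp1 : p ≤ 1 / 3) (hps0 : 0 < ps) (hps1 : ps ≤ 1) {τ : ℕ}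
    (hτub : ∀ d ∈ Finset.Icc 1 (N - 1), n d ≤ τ) (hτ2 : 2 ≤ τ) :
    π (0, 0) = (1 - 2 * p) * π (0, 0)
      + p * ∑ Δ ∈ Finset.Ico 1 τ, (1 - ps * Aact n 1 Δ) * π (1, Δ)
      + (1 - ps) * p * Pid π τ 1
      + ps * (1 - 2 * p) * ∑ d ∈ Finset.Icc 1 (N - 1),
          ((∑ Δ ∈ Finset.Ico (n d) τ, π (d, Δ)) + Pid π τ d) := by
  have h := hπ.2.2.2 (0, 0)
  have hdecomp : (fun x' => Kpol N p ps n x' (0, 0) * π x')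
      = fun x' : ℕ × ℕ => ps * (1 - 2 * p) * (Aact n x'.1 x'.2 * π x')
          + Pw N p x'.1 0 * ((1 - ps * Aact n x'.1 x'.2) * π x') := by
    funext x'
    rw [Kpol_eval_00]
    ring
  rw [hdecomp] at h
  have hg := hasSum_R hπ hN hτub
  -- the second piece
  have hbd : ∀ x : ℕ × ℕ,
      0 ≤ Pw N p x.1 0 * ((1 - ps * Aact n x.1 x.2) * π x) ∧
      Pw N p x.1 0 * ((1 - ps * Aact n x.1 x.2) * π x) ≤ π x :=
    fun x => sandwich (Pw_nonneg hp0 hp1) (Pw_le_one hp0 hp1)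
      (fact_nonneg hps1) (fact_le_one hps0.le) (pi_nonneg hπ _)
  have hsumh : Summable (fun x : ℕ × ℕ => Pw N p x.1 0 * ((1 - ps * Aact n x.1 x.2) * π x)) :=
    Summable.of_nonneg_of_le (fun x => (hbd x).1) (fun x => (hbd x).2) hπ.2.2.1.summable
  have hT : (∑' b : ℕ, (1 - ps * Aact n 1 b) * π (1, b))
      = (∑ Δ ∈ Finset.Ico 1 τ, (1 - ps * Aact n 1 Δ) * π (1, Δ)) + (1 - ps) * Pid π τ 1 := by
    have hsu : Summable (fun b : ℕ => (1 - ps * Aact n 1 b) * π (1, b)) := by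
      refine Summable.of_nonneg_of_le (fun b => ?_) (fun b => ?_) (summable_row hπ 1)
      · exact mul_nonneg (fact_nonneg hps1) (pi_nonneg hπ _)
      · exact mul_le_of_le_one_left (pi_nonneg hπ _) (fact_le_one hps0.le)
    have h2 := Summable.sum_add_tsum_nat_add (f := fun b => (1 - ps * Aact n 1 b) * π (1, b)) τ hsu
    rw [← h2]
    congr 1
    · rw [Finset.range_eq_Ico]
      refine (Finset.sum_subset (Finset.Ico_subset_Ico (by omega) le_rfl) ?_).symm
      intro x hx hx'
      rw [Finset.mem_Ico] at hx
      rw [Finset.mem_Ico] at hx'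
      have hx0 : x = 0 := by omega
      subst hx0
      rw [part_i_aux hπ hN 0 1 le_rfl (by norm_num [lB]), mul_zero]
    · have e3 : ∀ i : ℕ, (1 - ps * Aact n 1 (i + τ)) * π (1, i + τ)
          = (1 - ps) * π (1, i + τ) := by
        intro i
        rw [Aact_one le_rfl (le_trans (hτub 1 (Finset.mem_Icc.mpr ⟨le_rfl, by omega⟩))
          (by omega)), mul_one]
      rw [tsum_congr e3, tsum_mul_left]
      rfl
  have hh : HasSum (fun x : ℕ × ℕ => Pw N p x.1 0 * ((1 - ps * Aact n x.1 x.2) * π x))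
      ((1 - 2 * p) * π (0, 0)
        + p * ((∑ Δ ∈ Finset.Ico 1 τ, (1 - ps * Aact n 1 Δ) * π (1, Δ))
            + (1 - ps) * Pid π τ 1)) := by
    suffices hts : (∑' x : ℕ × ℕ, Pw N p x.1 0 * ((1 - ps * Aact n x.1 x.2) * π x))
        = (1 - 2 * p) * π (0, 0)
          + p * ((∑ Δ ∈ Finset.Ico 1 τ, (1 - ps * Aact n 1 Δ) * π (1, Δ))
              + (1 - ps) * Pid π τ 1) by
      rw [← hts]
      exact hsumh.hasSum
    rw [tsum_decomp hπ (fun x => (hbd x).1) (fun x => (hbd x).2)]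
    rw [tsum_eq_sum (s := ({0, 1} : Finset ℕ)) ?_]
    · rw [Finset.sum_pair (by norm_num : (0 : ℕ) ≠ 1)]
      have e0 : (∑' b : ℕ, Pw N p (0, b).1 0 * ((1 - ps * Aact n (0, b).1 (0, b).2) * π (0, b)))
          = (1 - 2 * p) * π (0, 0) := by
        rw [tsum_eq_sum (s := ({0} : Finset ℕ)) ?_]
        · rw [Finset.sum_singleton]
          show Pw N p 0 0 * ((1 - ps * Aact n 0 0) * π (0, 0)) = _
          rw [Pw_00, Aact_zero]
          ring
        · intro b hb
          rw [Finset.mem_singleton] at hb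
          show Pw N p 0 0 * ((1 - ps * Aact n 0 b) * π (0, b)) = 0
          rw [row0 hπ (by omega : 1 ≤ b)]
          ring
      have e1 : (∑' b : ℕ, Pw N p (1, b).1 0 * ((1 - ps * Aact n (1, b).1 (1, b).2) * π (1, b)))
          = p * ((∑ Δ ∈ Finset.Ico 1 τ, (1 - ps * Aact n 1 Δ) * π (1, Δ))
              + (1 - ps) * Pid π τ 1) := by
        have e4 : ∀ b : ℕ, Pw N p (1, b).1 0 * ((1 - ps * Aact n (1, b).1 (1, b).2) * π (1, b))
            = p * ((1 - ps * Aact n 1 b) * π (1, b)) := by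
          intro b
          show Pw N p 1 0 * _ = _
          rw [Pw_10 hN]
        rw [tsum_congr e4, tsum_mul_left, hT]
      rw [e0, e1]
    · intro a ha
      simp only [Finset.mem_insert, Finset.mem_singleton] at ha
      push_neg at ha
      have ha2 : 2 ≤ a := by omega
      have hz : ∀ b : ℕ, Pw N p (a, b).1 0 * ((1 - ps * Aact n (a, b).1 (a, b).2) * π (a, b)) = 0 := by
        intro b
        show Pw N p a 0 * _ = 0
        rw [Pw_src_zero hN ha2, zero_mul]
      rw [tsum_congr hz, tsum_zero]
  have hu := h.unique ((hg.mul_left (ps * (1 - 2 * p))).add hh)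
  linear_combination hu

lemma part_v_lem (hπ : IsStationaryPol N p ps n π) (hN : 3 ≤ N)
    (hp0 : 0 ≤ p) (hp1 : p ≤ 1 / 3) (hps0 : 0 < ps) (hps1 : ps ≤ 1) {τ : ℕ}
    (hτub : ∀ d ∈ Finset.Icc 1 (N - 1), n d ≤ τ) :
    π (1, 1) = 2 * p * π (0, 0)
      + 2 * ps * p * ∑ d ∈ Finset.Icc 1 (N - 1),
          ((∑ Δ ∈ Finset.Ico (n d) τ, π (d, Δ)) + Pid π τ d) := by
  have h := hπ.2.2.2 (1, 1)
  have hdecomp : (fun x' => Kpol N p ps n x' (1, 1) * π x')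
      = fun x' : ℕ × ℕ => 2 * ps * p * (Aact n x'.1 x'.2 * π x')
          + ((1 - ps * Aact n x'.1 x'.2) * (if x'.2 = 0 then Pw N p x'.1 1 else 0)) * π x' := by
    funext x'
    rw [Kpol_eval_11]
    ring
  rw [hdecomp] at h
  have hg := hasSum_R hπ hN hτub
  have hh : HasSum (fun x' : ℕ × ℕ =>
      ((1 - ps * Aact n x'.1 x'.2) * (if x'.2 = 0 then Pw N p x'.1 1 else 0)) * π x')
      (2 * p * π (0, 0)) := by
    have hsupp : ∀ x' ∉ (Finset.range N).image (fun a => ((a, 0) : ℕ × ℕ)),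
        ((1 - ps * Aact n x'.1 x'.2) * (if x'.2 = 0 then Pw N p x'.1 1 else 0)) * π x' = 0 := by
      intro x' hx'
      by_cases h2 : x'.2 = 0
      · have h1 : N ≤ x'.1 := by
          by_contra hc
          push_neg at hc
          exact hx' (Finset.mem_image.mpr ⟨x'.1, Finset.mem_range.mpr hc,
            by rw [← h2]⟩)
        rw [hπ.2.1 x' h1, mul_zero]
      · rw [if_neg h2, mul_zero, zero_mul]
    have h3 := hasSum_sum_of_ne_finset_zero (L := SummationFilter.unconditional _) hsupp
    have h4 : (∑ x' ∈ (Finset.range N).image (fun a => ((a, 0) : ℕ × ℕ)),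
        ((1 - ps * Aact n x'.1 x'.2) * (if x'.2 = 0 then Pw N p x'.1 1 else 0)) * π x')
        = 2 * p * π (0, 0) := by
      rw [Finset.sum_image (by intro a _ b _ hab; simpa using hab)]
      rw [Finset.sum_eq_single_of_mem 0 (Finset.mem_range.mpr (by omega))]
      · show ((1 - ps * Aact n 0 0) * (if (0 : ℕ) = 0 then Pw N p 0 1 else 0)) * π (0, 0) = _
        rw [Aact_zero, if_pos rfl, Pw_01]
        ring
      · intro b _ hb
        show ((1 - ps * Aact n b 0) * (if (0 : ℕ) = 0 then Pw N p b 1 else 0)) * π (b, 0) = 0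
        rw [part_i_aux hπ hN 0 b (by omega) (by
          have := self_le_lB b
          omega), mul_zero]
    rw [← h4]
    exact h3
  have hu := h.unique ((hg.mul_left (2 * ps * p)).add hh)
  rw [hu]
  ring

lemma part_vi_lem (hπ : IsStationaryPol N p ps n π) (hN : 3 ≤ N) {τ : ℕ} :
    (∑ d ∈ Finset.Icc 1 (N - 1),
        ((∑ Δ ∈ Finset.Ico (lB d) τ, π (d, Δ)) + Pid π τ d)) + π (0, 0) = 1 := by
  have h1 : (∑' x : ℕ × ℕ, π x) = 1 := hπ.2.2.1.tsum_eq
  rw [tsum_decomp hπ (pi_nonneg hπ) (fun x => le_refl _)] at h1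
  rw [tsum_eq_sum (s := Finset.Icc 0 (N - 1)) ?_] at h1
  · have hI : Finset.Icc 0 (N - 1) = insert 0 (Finset.Icc 1 (N - 1)) := by
      ext a
      simp only [Finset.mem_Icc, Finset.mem_insert]
      omega
    rw [hI, Finset.sum_insert (by simp)] at h1
    have e0 : (∑' b : ℕ, π (0, b)) = π (0, 0) := by
      rw [tsum_eq_sum (s := ({0} : Finset ℕ)) ?_]
      · rw [Finset.sum_singleton]
      · intro b hb
        rw [Finset.mem_singleton] at hb
        exact row0 hπ (by omega)
    have e1 : ∀ d ∈ Finset.Icc 1 (N - 1), (∑' b : ℕ, π (d, b))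
        = (∑ Δ ∈ Finset.Ico (lB d) τ, π (d, Δ)) + Pid π τ d := by
      intro d hd
      rw [Finset.mem_Icc] at hd
      have e2 : (∑' b : ℕ, π (d, b)) = ∑' b : ℕ, π (d, b + 0) := by
        exact tsum_congr fun b => by rw [Nat.add_zero]
      rw [e2, tail_split hπ (Nat.zero_le τ)]
      congr 1
      refine (Finset.sum_subset (Finset.Ico_subset_Ico (Nat.zero_le _) le_rfl) ?_).symm
      intro x hx hx'
      rw [Finset.mem_Ico] at hx
      rw [Finset.mem_Ico] at hx'
      exact part_i_aux hπ hN x d hd.1 (by omega)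
    rw [e0, Finset.sum_congr rfl e1] at h1
    linarith [h1]
  · intro a ha
    rw [Finset.mem_Icc] at ha
    have haN : N ≤ a := by omega
    have hz : ∀ b : ℕ, π (a, b) = 0 := fun b => hπ.2.1 (a, b) haN
    rw [tsum_congr hz, tsum_zero]

end Stat4

/-- expected transmission rate: the finite balance system. -/
theorem expected_transmission_rate_finite_system
    (N : ℕ) (p ps : ℝ)
    (hN : 3 ≤ N) (hp0 : 0 ≤ p) (hp1 : p ≤ 1 / 3)
    (hps0 : 0 < ps) (hps1 : ps ≤ 1)
    (n : ℕ → ℕ) (hn : ∀ d, 1 ≤ d → d ≤ N - 1 → 1 ≤ n d)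
    (τ : ℕ) (hτub : ∀ d ∈ Finset.Icc 1 (N - 1), n d ≤ τ)
    (hτmem : ∃ d ∈ Finset.Icc 1 (N - 1), n d = τ) (hτ2 : 2 ≤ τ)
    (π : ℕ × ℕ → ℝ) (hπ : IsStationaryPol N p ps n π) :
    -- the expected transmission rate equals the finite expression
    (∑ d ∈ Finset.Icc 1 (N - 1), ∑' Δ : ℕ, π (d, Δ + n d))
      = ∑ d ∈ Finset.Icc 1 (N - 1),
          ((∑ Δ ∈ Finset.Ico (n d) τ, π (d, Δ)) + Pid π τ d) ∧
    -- (i) virtual states carry no mass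
    (∀ d ∈ Finset.Icc 1 (N - 1), ∀ Δ : ℕ, Δ < lB d → π (d, Δ) = 0) ∧
    -- (ii) interior balance equations
    (∀ d ∈ Finset.Icc 1 (N - 1), ∀ Δ : ℕ, max 2 (lB d) ≤ Δ → Δ ≤ τ - 1 →
      π (d, Δ) = ∑ d' ∈ Finset.Icc 1 (N - 1),
        Pw N p d' d * (1 - ps * Aact n d' (Δ - d)) * π (d', Δ - d)) ∧
    -- (iii) balance equations for the tail masses
    (∀ d ∈ Finset.Icc 1 (N - 1),
      Pid π τ d = ∑ d' ∈ Finset.Icc 1 (N - 1),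
        Pw N p d' d *
          ((∑ Δ ∈ Finset.Ico (τ - d) τ, (1 - ps * Aact n d' Δ) * π (d', Δ))
            + (1 - ps) * Pid π τ d')) ∧
    -- (iv) balance equation at (0,0)
    (π (0, 0) = (1 - 2 * p) * π (0, 0)
      + p * ∑ Δ ∈ Finset.Ico 1 τ, (1 - ps * Aact n 1 Δ) * π (1, Δ)
      + (1 - ps) * p * Pid π τ 1
      + ps * (1 - 2 * p) * ∑ d ∈ Finset.Icc 1 (N - 1),
          ((∑ Δ ∈ Finset.Ico (n d) τ, π (d, Δ)) + Pid π τ d)) ∧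
    -- (v) balance equation at (1,1)
    (π (1, 1) = 2 * p * π (0, 0)
      + 2 * ps * p * ∑ d ∈ Finset.Icc 1 (N - 1),
          ((∑ Δ ∈ Finset.Ico (n d) τ, π (d, Δ)) + Pid π τ d)) ∧
    -- (vi) normalization
    ((∑ d ∈ Finset.Icc 1 (N - 1),
        ((∑ Δ ∈ Finset.Ico (lB d) τ, π (d, Δ)) + Pid π τ d)) + π (0, 0) = 1) := by
  refine ⟨?_, ?_, ?_, ?_, ?_, ?_, ?_⟩
  · exact Finset.sum_congr rfl fun d hd => tail_split hπ (hτub d hd)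
  · intro d hd Δ hΔ
    rw [Finset.mem_Icc] at hd
    exact part_i_aux hπ hN Δ d hd.1 hΔ
  · intro d hd Δ hΔ1 hΔ2
    rw [Finset.mem_Icc] at hd
    have h2 : 2 ≤ Δ := le_trans (le_max_left _ _) hΔ1
    have hdΔ : d ≤ Δ := le_trans (self_le_lB d) (le_trans (le_max_right _ _) hΔ1)
    rw [balance_main hπ hN hd.1 h2 hdΔ]
    exact Finset.sum_congr rfl fun d' _ => by ring
  · intro d hd
    rw [Finset.mem_Icc] at hd
    exact part_iii_lem hπ hN hp0 hp1 hps0 hps1 hτub hτ2 hd.1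
  · exact part_iv_lem hπ hN hp0 hp1 hps0 hps1 hτub hτ2
  · exact part_v_lem hπ hN hp0 hp1 hps0 hps1 hτub
  · exact part_vi_lem hπ hN (τ := τ)
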